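/- Let R be a commutative ring and, for each maximal ideal m of R, let X(m) be a Thomason subset of Spec(R_m). If the family {X(m) : m a maximal ideal of R} satisfies condition (†), then ⋃_{m maximal} X(m)* = {p ∈ Spec(R) : for every maximal ideal m of R with p ⊆ m, the prime p_m belongs to X(m)}. -/

import Mathlib

open PrimeSpectrum
universe u

/-- A subset of `Spec A` is Thomason if it is a union of the zero loci
of a set of finitely generated ideals. -/
def IsThomason {A : Type*} [CommRing A] (X : Set (PrimeSpectrum A)) : Prop :=
  ∃ 𝓘 : Set (Ideal A), (∀ I ∈ 𝓘, I.FG) ∧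
    X = ⋃ I ∈ 𝓘, PrimeSpectrum.zeroLocus (I : Set A)

variable {R : Type u} [CommRing R]

/-- The map `Spec (R_m) → Spec R` induced by the localization map. -/
def locMap (m : MaximalSpectrum R) :
    PrimeSpectrum (Localization.AtPrime m.asIdeal) → PrimeSpectrum R :=
  PrimeSpectrum.comap (algebraMap R (Localization.AtPrime m.asIdeal))

/-- `Y*`: the image of a subset of `Spec (R_m)` in `Spec R`. -/
def star (m : MaximalSpectrum R)
    (Y : Set (PrimeSpectrum (Localization.AtPrime m.asIdeal))) : Set (PrimeSpectrum R) :=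
  locMap m '' Y

/-- `p_m`: the prime ideal `p R_m` of `R_m` corresponding to a prime `p ⊆ m` of `R`. -/
def localizedPrime (m : MaximalSpectrum R) (p : PrimeSpectrum R)
    (hp : p.asIdeal ≤ m.asIdeal) : PrimeSpectrum (Localization.AtPrime m.asIdeal) :=
  ⟨p.asIdeal.map (algebraMap R (Localization.AtPrime m.asIdeal)),
    IsLocalization.isPrime_of_isPrime_disjoint m.asIdeal.primeCompl _ p.asIdeal p.isPrime
      (Set.disjoint_left.mpr fun _ hx hxp => hx (hp hxp))⟩

/-- Condition (†). -/
def Dagger (Xf : ∀ m : MaximalSpectrum R, Set (PrimeSpectrum (Localization.AtPrime m.asIdeal))) :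
    Prop :=
  ∀ m m' : MaximalSpectrum R,
    {p ∈ star m (Xf m) | p.asIdeal ≤ m'.asIdeal} =
      {p ∈ star m' (Xf m') | p.asIdeal ≤ m.asIdeal}

/-- If the family `{X(m)}` of Thomason subsets satisfies (†), then
`⋃ X(m)* = {p ∈ Spec R : p_m ∈ X(m) for every maximal ideal m ⊇ p}`. -/
theorem stmt1
    (Xf : ∀ m : MaximalSpectrum R, Set (PrimeSpectrum (Localization.AtPrime m.asIdeal)))
    (hXf : ∀ m, IsThomason (Xf m)) (hDagger : Dagger Xf) :
    (⋃ m, star m (Xf m)) =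
      {p : PrimeSpectrum R |
        ∀ (m : MaximalSpectrum R) (hp : p.asIdeal ≤ m.asIdeal), localizedPrime m p hp ∈ Xf m} := by
  ext p
  simp only [Set.mem_iUnion, Set.mem_setOf_eq]
  constructor
  · rintro ⟨m, q, hq, rfl⟩ m' hp'
    have hmem : locMap m q ∈ {p ∈ star m (Xf m) | p.asIdeal ≤ m'.asIdeal} :=
      ⟨⟨q, hq, rfl⟩, hp'⟩
    rw [hDagger m m'] at hmem
    obtain ⟨⟨q', hq', hq'eq⟩, -⟩ := hmem
    have : localizedPrime m' (locMap m q) hp' = q' := by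
      apply PrimeSpectrum.ext
      show Ideal.map _ (locMap m q).asIdeal = q'.asIdeal
      rw [← hq'eq]
      exact IsLocalization.map_comap m'.asIdeal.primeCompl _ q'.asIdeal
    rw [this]; exact hq'
  · intro h
    obtain ⟨m, hm, hpm⟩ := p.asIdeal.exists_le_maximal p.isPrime.ne_top
    refine ⟨⟨m, hm⟩, localizedPrime ⟨m, hm⟩ p hpm, h ⟨m, hm⟩ hpm, ?_⟩
    apply PrimeSpectrum.ext
    show Ideal.comap _ (Ideal.map _ p.asIdeal) = p.asIdeal
    exact IsLocalization.comap_map_of_isPrime_disjoint m.primeCompl _ p.isPrime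
      (Set.disjoint_left.mpr fun _ hx hxp => hx (hpm hxp))
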